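/- Let Σ be a positive-definite n×n real matrix, q ∈ ℝⁿ with q > 0, d ∈ ℝⁿ, and u such that uq + d > 0. For a nonzero nonnegative weight vector w ∈ ℝⁿ, define σ²(w) := ⟨w, Σ w⟩ / ⟨w, uq + d⟩². If w⋆ minimizes σ²(w) over nonzero nonnegative w, then σ²(w⋆) = (inf_{v ≥ uq} ⟨v + d, Σ⁻¹ (v + d)⟩)⁻¹. -/

import Mathlib

open Matrix
variable {n : ℕ}

lemma dot_sym (M : Matrix (Fin n) (Fin n) ℝ) (hM : Mᵀ = M) (x y : Fin n → ℝ) :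
    x ⬝ᵥ M *ᵥ y = y ⬝ᵥ M *ᵥ x := by
  rw [Matrix.dotProduct_mulVec, ← hM, Matrix.vecMul_transpose, dotProduct_comm, hM]

lemma mulVec_dot (A : Matrix (Fin n) (Fin n) ℝ) (x z : Fin n → ℝ) :
    (A *ᵥ x) ⬝ᵥ z = x ⬝ᵥ (Aᵀ *ᵥ z) := by
  rw [dotProduct_comm, Matrix.dotProduct_mulVec, ← Matrix.mulVec_transpose,
    dotProduct_comm]

lemma mulVec_dot_mulVec (A B : Matrix (Fin n) (Fin n) ℝ) (x y : Fin n → ℝ) :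
    (A *ᵥ x) ⬝ᵥ (B *ᵥ y) = x ⬝ᵥ ((Aᵀ * B) *ᵥ y) := by
  rw [mulVec_dot, Matrix.mulVec_mulVec]

lemma sum_sq_mulVec_le (A : Matrix (Fin n) (Fin n) ℝ) (y : Fin n → ℝ) :
    ∑ i, ((A *ᵥ y) i)^2 ≤ (∑ i, ∑ j, (A i j)^2) * ∑ j, (y j)^2 := by
  rw [Finset.sum_mul]
  refine Finset.sum_le_sum fun i _ => ?_
  simpa [Matrix.mulVec, dotProduct] using
    Finset.sum_mul_sq_le_sq_mul_sq Finset.univ (fun j => A i j) y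

lemma pd_pos (M : Matrix (Fin n) (Fin n) ℝ) (hM : M.PosDef) (x : Fin n → ℝ) (hx : x ≠ 0) :
    0 < x ⬝ᵥ M *ᵥ x := by
  have := hM.dotProduct_mulVec_pos hx
  simpa using this

open scoped MatrixOrder in
lemma cs_ineq (Sig : Matrix (Fin n) (Fin n) ℝ) (hSig : Sig.PosDef) (x y : Fin n → ℝ) :
    (x ⬝ᵥ y)^2 ≤ (x ⬝ᵥ Sig *ᵥ x) * (y ⬝ᵥ Sig⁻¹ *ᵥ y) := by
  set S := CFC.sqrt Sig with hSdef
  have hSS : S * S = Sig := CFC.sqrt_mul_sqrt_self Sig hSig.posSemidef.nonneg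
  have hST : Sᵀ = S := (CFC.sqrt_nonneg Sig).posSemidef.1
  have hdet : IsUnit S.det := by
    have := hSig.det_pos
    rw [← hSS, Matrix.det_mul] at this
    exact isUnit_iff_ne_zero.2 (by nlinarith)
  have hinv : S * S⁻¹ = 1 := Matrix.mul_nonsing_inv S hdet
  have hinv' : S⁻¹ * S = 1 := Matrix.nonsing_inv_mul S hdet
  have hITinv : S⁻¹ᵀ = S⁻¹ := by rw [Matrix.transpose_nonsing_inv, hST]
  have hII : S⁻¹ * S⁻¹ = Sig⁻¹ := by rw [← hSS, Matrix.mul_inv_rev]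
  have key1 : x ⬝ᵥ y = ∑ i, (S *ᵥ x) i * (S⁻¹ *ᵥ y) i := by
    have : (S *ᵥ x) ⬝ᵥ (S⁻¹ *ᵥ y) = x ⬝ᵥ y := by
      rw [mulVec_dot_mulVec, hST, hinv, Matrix.one_mulVec]
    rw [← this]; rfl
  have key2 : ∑ i, ((S *ᵥ x) i)^2 = x ⬝ᵥ Sig *ᵥ x := by
    have : (S *ᵥ x) ⬝ᵥ (S *ᵥ x) = x ⬝ᵥ Sig *ᵥ x := by
      rw [mulVec_dot_mulVec, hST, hSS]
    rw [← this]; simp [dotProduct, sq]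
  have key3 : ∑ i, ((S⁻¹ *ᵥ y) i)^2 = y ⬝ᵥ Sig⁻¹ *ᵥ y := by
    have : (S⁻¹ *ᵥ y) ⬝ᵥ (S⁻¹ *ᵥ y) = y ⬝ᵥ Sig⁻¹ *ᵥ y := by
      rw [mulVec_dot_mulVec, hITinv, hII]
    rw [← this]; simp [dotProduct, sq]
  rw [key1, ← key2, ← key3]
  exact Finset.sum_mul_sq_le_sq_mul_sq Finset.univ _ _

lemma tail_lb (K a Q : ℝ) (hK : 0 ≤ K) (hQ : 0 ≤ Q) (h1 : a ≤ K * Q) :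
    (K+1)⁻¹ * a ≤ Q := by
  have h2 : a ≤ (K+1) * Q := h1.trans (mul_le_mul_of_nonneg_right (by linarith) hQ)
  calc (K+1)⁻¹ * a ≤ (K+1)⁻¹ * ((K+1) * Q) := mul_le_mul_of_nonneg_left h2 (by positivity)
    _ = Q := by rw [← mul_assoc, inv_mul_cancel₀ (by positivity), one_mul]

lemma quad_lb_aux (S M : Matrix (Fin n) (Fin n) ℝ) (hSS : S * S = M) (hST : Sᵀ = S)
    (hinv' : S⁻¹ * S = 1) :
    ∃ ε > 0, ∀ x : Fin n → ℝ, ε * (∑ i, (x i)^2) ≤ x ⬝ᵥ M *ᵥ x := by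
  have hK : 0 ≤ ∑ i, ∑ j, ((S⁻¹) i j)^2 :=
    Finset.sum_nonneg fun i _ => Finset.sum_nonneg fun j _ => sq_nonneg _
  refine ⟨((∑ i, ∑ j, ((S⁻¹) i j)^2)+1)⁻¹, by positivity, fun x => ?_⟩
  have key2 : ∑ i, ((S *ᵥ x) i)^2 = x ⬝ᵥ M *ᵥ x := by
    have : (S *ᵥ x) ⬝ᵥ (S *ᵥ x) = x ⬝ᵥ M *ᵥ x := by
      rw [mulVec_dot_mulVec, hST, hSS]
    rw [← this]; simp [dotProduct, sq]
  have hxid : S⁻¹ *ᵥ (S *ᵥ x) = x := by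
    rw [Matrix.mulVec_mulVec, hinv', Matrix.one_mulVec]
  have h1 : ∑ i, (x i)^2 ≤ (∑ i, ∑ j, ((S⁻¹) i j)^2) * ∑ i, ((S *ᵥ x) i)^2 := by
    calc ∑ i, (x i)^2 = ∑ i, ((S⁻¹ *ᵥ (S *ᵥ x)) i)^2 := by rw [hxid]
    _ ≤ (∑ i, ∑ j, ((S⁻¹) i j)^2) * ∑ i, ((S *ᵥ x) i)^2 := sum_sq_mulVec_le _ _
  have hQ : 0 ≤ ∑ i, ((S *ᵥ x) i)^2 := Finset.sum_nonneg fun i _ => sq_nonneg _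
  rw [← key2]
  exact tail_lb _ _ _ hK hQ h1

open scoped MatrixOrder in
lemma posdef_lb (M : Matrix (Fin n) (Fin n) ℝ) (hM : M.PosDef) :
    ∃ ε > 0, ∀ x : Fin n → ℝ, ε * (∑ i, (x i)^2) ≤ x ⬝ᵥ M *ᵥ x := by
  have hSS : CFC.sqrt M * CFC.sqrt M = M := CFC.sqrt_mul_sqrt_self M hM.posSemidef.nonneg
  have hST : (CFC.sqrt M)ᵀ = CFC.sqrt M := (CFC.sqrt_nonneg M).posSemidef.1
  have hdet : IsUnit (CFC.sqrt M).det := by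
    have := hM.det_pos
    rw [← hSS, Matrix.det_mul] at this
    exact isUnit_iff_ne_zero.2 (by nlinarith)
  exact quad_lb_aux _ _ hSS hST (Matrix.nonsing_inv_mul _ hdet)


lemma dot_sym' (M : Matrix (Fin n) (Fin n) ℝ) (hM : Mᵀ = M) (x y : Fin n → ℝ) :
    x ⬝ᵥ M *ᵥ y = y ⬝ᵥ M *ᵥ x := by
  rw [Matrix.dotProduct_mulVec, ← hM, Matrix.vecMul_transpose, dotProduct_comm, hM]

lemma single_quad (M : Matrix (Fin n) (Fin n) ℝ) (hMT : Mᵀ = M) (x : Fin n → ℝ) (t : ℝ)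
    (i : Fin n) :
    (x + t • Pi.single (M := fun _ : Fin n => ℝ) i 1) ⬝ᵥ M *ᵥ (x + t • Pi.single (M := fun _ : Fin n => ℝ) i 1)
      = x ⬝ᵥ M *ᵥ x + 2*t*((M *ᵥ x) i) + t^2 * M i i := by
  have h1 : (t • Pi.single (M := fun _ : Fin n => ℝ) i 1) ⬝ᵥ M *ᵥ x = t * (M *ᵥ x) i := by
    rw [smul_dotProduct, single_dotProduct, one_mul]; rfl
  have h2 : x ⬝ᵥ M *ᵥ (t • Pi.single (M := fun _ : Fin n => ℝ) i 1) = t * (M *ᵥ x) i := by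
    rw [dot_sym' M hMT, h1]
  have h3 : (t • Pi.single (M := fun _ : Fin n => ℝ) i 1) ⬝ᵥ M *ᵥ (t • Pi.single (M := fun _ : Fin n => ℝ) i 1) = t^2 * M i i := by
    rw [Matrix.mulVec_smul, smul_dotProduct, dotProduct_smul,
      single_dotProduct, Matrix.mulVec_single, one_mul]
    simp [smul_eq_mul, sq]; ring
  rw [add_dotProduct, Matrix.mulVec_add, dotProduct_add, dotProduct_add,
    h1, h2, h3]
  ring


theorem optimal_variance_eq_inverse_decay_rate (n : ℕ)
    (Sig : Matrix (Fin n) (Fin n) ℝ) (hSig : Sig.PosDef)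
    (q d : Fin n → ℝ) (hq : ∀ i, 0 < q i) (u : ℝ)
    (hud : ∀ i, 0 < u * q i + d i)
    (wstar : Fin n → ℝ) (hws : 0 ≤ wstar ∧ wstar ≠ 0)
    (hmin : IsMinOn (fun w : Fin n → ℝ => (w ⬝ᵥ Sig.mulVec w) / (w ⬝ᵥ (u • q + d)) ^ 2)
      {w | 0 ≤ w ∧ w ≠ 0} wstar) :
    (wstar ⬝ᵥ Sig.mulVec wstar) / (wstar ⬝ᵥ (u • q + d)) ^ 2 =
      (sInf {r : ℝ | ∃ v : Fin n → ℝ, u • q ≤ v ∧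
        r = (v + d) ⬝ᵥ Sig⁻¹.mulVec (v + d)})⁻¹ := by
  obtain ⟨hw0, hwne⟩ := hws
  have hw0' : ∀ j, 0 ≤ wstar j := fun j => hw0 j
  rcases Nat.eq_zero_or_pos n with hn | hn
  · subst hn; exact absurd (funext fun i => i.elim0) hwne
  set b : Fin n → ℝ := u • q + d with hbdef
  have hb : ∀ i, 0 < b i := fun i => by
    simpa [hbdef, Pi.add_apply, Pi.smul_apply, smul_eq_mul] using hud i
  have hM : (Sig⁻¹).PosDef := hSig.inv
  have hMT : (Sig⁻¹)ᵀ = Sig⁻¹ := hM.1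
  set g : (Fin n → ℝ) → ℝ := fun v => v ⬝ᵥ Sig⁻¹ *ᵥ v with hgdef
  have hgc : Continuous g := by
    have hfe : g = fun v => ∑ i, v i * ∑ j, Sig⁻¹ i j * v j := by
      funext v; simp [hgdef, dotProduct, Matrix.mulVec]
    rw [hfe]
    exact continuous_finset_sum _ fun i _ =>
      (continuous_apply i).mul (continuous_finset_sum _ fun j _ =>
        continuous_const.mul (continuous_apply j))
  obtain ⟨ε, hε, hlb⟩ := posdef_lb _ hM
  set Kset : Set (Fin n → ℝ) := {v | b ≤ v} ∩ {v | g v ≤ g b} with hKdef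
  have hKne : b ∈ Kset := ⟨le_refl b, le_refl (g b)⟩
  have hKclosed : IsClosed Kset := by
    have h1 : IsClosed {v : Fin n → ℝ | b ≤ v} := by
      have : {v : Fin n → ℝ | b ≤ v} = ⋂ i, {v : Fin n → ℝ | b i ≤ v i} := by
        ext v; simp [Pi.le_def, Set.mem_iInter]
      rw [this]
      exact isClosed_iInter fun i => isClosed_le continuous_const (continuous_apply i)
    exact h1.inter (isClosed_le hgc continuous_const)
  have hKbdd : Bornology.IsBounded Kset := by
    rw [isBounded_iff_forall_norm_le]
    refine ⟨Real.sqrt (g b / ε), fun v hv => ?_⟩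
    rw [pi_norm_le_iff_of_nonneg (Real.sqrt_nonneg _)]
    intro i
    have h2 : (v i)^2 ≤ ∑ j, (v j)^2 :=
      Finset.single_le_sum (fun j _ => sq_nonneg (v j)) (Finset.mem_univ i)
    have h3 : ε * ∑ j, (v j)^2 ≤ g v := hlb v
    have h4 : g v ≤ g b := hv.2
    have h1 : (v i)^2 ≤ g b / ε := by rw [le_div_iff₀ hε]; nlinarith
    have h5 : ‖v i‖ = Real.sqrt ((v i)^2) := by
      rw [Real.sqrt_sq_eq_abs]; rfl
    rw [h5]; exact Real.sqrt_le_sqrt h1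
  have hKcomp : IsCompact Kset := Metric.isCompact_of_isClosed_isBounded hKclosed hKbdd
  obtain ⟨vs, hvsK, hvsmin⟩ := hKcomp.exists_isMinOn ⟨b, hKne⟩ hgc.continuousOn
  have hbvs : b ≤ vs := hvsK.1
  have hglob : ∀ v, b ≤ v → g vs ≤ g v := by
    intro v hv
    by_cases h : g v ≤ g b
    · exact isMinOn_iff.mp hvsmin v ⟨hv, h⟩
    · exact (isMinOn_iff.mp hvsmin b hKne).trans (le_of_not_ge h)
  set w : Fin n → ℝ := Sig⁻¹ *ᵥ vs with hwdef
  have hMii : ∀ i, 0 < Sig⁻¹ i i := by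
    intro i
    have h0 : (Pi.single (M := fun _ : Fin n => ℝ) i 1) ≠ 0 := by
      intro h; have := congrFun h i; simp at this
    have := pd_pos _ hM _ h0
    simpa [single_dotProduct, Matrix.mulVec_single] using this
  have hexp : ∀ (t : ℝ) (i : Fin n),
      g (vs + t • Pi.single (M := fun _ : Fin n => ℝ) i 1)
        = g vs + 2*t*(w i) + t^2 * Sig⁻¹ i i := by
    intro t i
    rw [hgdef, hwdef]
    exact single_quad Sig⁻¹ hMT vs t i
  have hfeas : ∀ (t : ℝ) (i : Fin n), t ≤ vs i - b i →
      b ≤ vs + (-t) • Pi.single (M := fun _ : Fin n => ℝ) i 1 := by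
    intro t i ht
    rw [Pi.le_def]
    intro j
    rcases eq_or_ne j i with rfl | hne
    · simp only [Pi.add_apply, Pi.smul_apply, Pi.single_eq_same, smul_eq_mul, mul_one]
      linarith
    · simp only [Pi.add_apply, Pi.smul_apply, Pi.single_eq_of_ne hne, smul_eq_mul, mul_zero,
        add_zero]
      exact hbvs j
  have hwpos : ∀ i, 0 ≤ w i := by
    intro i; by_contra hneg; push_neg at hneg
    have hMi := hMii i
    set t : ℝ := -(w i) / Sig⁻¹ i i with htdef
    have ht : 0 < t := div_pos (by linarith) hMi
    have htMii : t * Sig⁻¹ i i = -(w i) := div_mul_cancel₀ _ hMi.ne'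
    have hfe : b ≤ vs + (-(-t)) • Pi.single (M := fun _ : Fin n => ℝ) i 1 := by
      apply hfeas
      have := hbvs i
      linarith
    rw [neg_neg] at hfe
    have hle := hglob _ hfe
    rw [hexp t i] at hle
    have h0 : 0 ≤ 2*t*(w i) + t^2*Sig⁻¹ i i := by linarith
    have h2 : t^2 * Sig⁻¹ i i = t * (t * Sig⁻¹ i i) := by ring
    rw [htMii] at h2
    have h3 : t * w i < 0 := mul_neg_of_pos_of_neg ht hneg
    nlinarith
  have hcompl : ∀ i, b i < vs i → w i = 0 := by
    intro i hbi
    by_contra hne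
    have hwi : 0 < w i := lt_of_le_of_ne (hwpos i) (Ne.symm hne)
    have hMi := hMii i
    set t : ℝ := min (vs i - b i) (w i / Sig⁻¹ i i) with htdef
    have ht : 0 < t := lt_min (by linarith) (div_pos hwi hMi)
    have hfe := hfeas t i (min_le_left _ _)
    have hle := hglob _ hfe
    rw [hexp (-t) i] at hle
    have h1 : t * Sig⁻¹ i i ≤ w i :=
      (le_div_iff₀ hMi).mp (min_le_right (vs i - b i) (w i / Sig⁻¹ i i))
    have h0 : 0 ≤ 2*(-t)*(w i) + (-t)^2*Sig⁻¹ i i := by linarith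
    have h2 : (-t)^2*Sig⁻¹ i i = t * (t * Sig⁻¹ i i) := by ring
    nlinarith [mul_le_mul_of_nonneg_left h1 ht.le, mul_pos ht hwi]
  have hwvb : w ⬝ᵥ vs = w ⬝ᵥ b := by
    have hsub : w ⬝ᵥ (vs - b) = 0 := by
      have : ∀ i ∈ Finset.univ, w i * (vs - b) i = 0 := by
        intro i _
        rcases eq_or_lt_of_le (hbvs i) with h | h
        · simp [Pi.sub_apply, ← h]
        · simp [hcompl i h]
      exact Finset.sum_eq_zero this
    rw [dotProduct_sub] at hsub; linarith
  have hgw : g vs = w ⬝ᵥ vs := by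
    rw [hgdef, hwdef, dotProduct_comm]
  obtain ⟨i0⟩ : Nonempty (Fin n) := ⟨⟨0, hn⟩⟩
  have hvs_ne : vs ≠ 0 := by
    intro h
    rw [h] at hbvs
    exact (hb i0).not_ge (hbvs i0)
  have hc_pos : 0 < g vs := pd_pos _ hM vs hvs_ne
  have hwb : w ⬝ᵥ b = g vs := by rw [hgw]; exact hwvb.symm
  have hSw : Sig *ᵥ w = vs := by
    rw [hwdef, Matrix.mulVec_mulVec,
      Matrix.mul_nonsing_inv _ (isUnit_iff_ne_zero.2 hSig.det_pos.ne'), Matrix.one_mulVec]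
  have hwSw : w ⬝ᵥ Sig *ᵥ w = g vs := by rw [hSw]; exact hgw.symm
  have hwne0 : w ≠ 0 := by
    intro h
    rw [h, zero_dotProduct] at hwb
    exact hc_pos.ne hwb
  set T := {r : ℝ | ∃ v : Fin n → ℝ, u • q ≤ v ∧
      r = (v + d) ⬝ᵥ Sig⁻¹.mulVec (v + d)} with hTdef
  have hmemT : g vs ∈ T := by
    refine ⟨vs - d, ?_, ?_⟩
    · rw [Pi.le_def]
      intro j
      have h1 := hbvs j
      have h2 : b j = u * q j + d j := by
        simp [hbdef, Pi.add_apply, Pi.smul_apply, smul_eq_mul]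
      simp only [Pi.sub_apply, Pi.smul_apply, smul_eq_mul]
      linarith
    · rw [sub_add_cancel, hgdef]
  have hlbT : ∀ r ∈ T, g vs ≤ r := by
    rintro r ⟨v, hv, rfl⟩
    have : b ≤ v + d := by
      rw [Pi.le_def]
      intro j
      have h1 := hv j
      have h2 : b j = u * q j + d j := by
        simp [hbdef, Pi.add_apply, Pi.smul_apply, smul_eq_mul]
      simp only [Pi.smul_apply, smul_eq_mul] at h1
      simp only [Pi.add_apply]
      linarith
    exact hglob _ this
  have hsInf : sInf T = g vs :=
    le_antisymm (csInf_le ⟨g vs, hlbT⟩ hmemT) (le_csInf ⟨g vs, hmemT⟩ hlbT)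
  rw [hsInf]
  apply le_antisymm
  · have h1 := isMinOn_iff.mp hmin w ⟨Pi.le_def.mpr fun i => by simpa using hwpos i, hwne0⟩
    rw [hwSw, hwb] at h1
    calc (wstar ⬝ᵥ Sig.mulVec wstar) / (wstar ⬝ᵥ b) ^ 2 ≤ g vs / (g vs)^2 := h1
      _ = (g vs)⁻¹ := by rw [pow_two, ← div_div, div_self hc_pos.ne', one_div]
  · have hQ : 0 < wstar ⬝ᵥ Sig *ᵥ wstar := pd_pos _ hSig wstar hwne
    have hwb2 : 0 < wstar ⬝ᵥ b := by
      obtain ⟨i, hi⟩ := Function.ne_iff.mp hwne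
      have hi' : 0 < wstar i := lt_of_le_of_ne (hw0' i) (Ne.symm (by simpa using hi))
      exact Finset.sum_pos' (fun j _ => mul_nonneg (hw0' j) (hb j).le)
        ⟨i, Finset.mem_univ i, mul_pos hi' (hb i)⟩
    have hmono : wstar ⬝ᵥ b ≤ wstar ⬝ᵥ vs :=
      Finset.sum_le_sum fun j _ => mul_le_mul_of_nonneg_left (hbvs j) (hw0' j)
    have hcs := cs_ineq Sig hSig wstar vs
    have hchain : (wstar ⬝ᵥ b)^2 ≤ (wstar ⬝ᵥ Sig *ᵥ wstar) * g vs := by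
      calc (wstar ⬝ᵥ b)^2 ≤ (wstar ⬝ᵥ vs)^2 := pow_le_pow_left₀ hwb2.le hmono 2
        _ ≤ _ := hcs
    rw [inv_eq_one_div, div_le_div_iff₀ hc_pos (pow_pos hwb2 2)]
    linarith
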